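/- For all sufficiently large n and any real numbers k, q with k ≥ √n and k = q·log^1000 n (asymptotically), with A = 4n²·log n / k, the probability that a uniformly random k-tuple of points in the n×n grid leaves at least √(kq) blocks empty in a fixed partition of the grid into n²/A equal-area blocks is at most 2^{-q·log^{501} n}. -/

import Mathlib

open Classical Real Finset in
/-- A uniformly random `k`-tuple of points in the `n × n` grid leaves at least
`√(kq)` blocks empty (in a fixed partition of the grid into `n²/A` equal-area blocks,
`A = 4n² log n / k`) with probability at most `2^{-q log^{501} n}`. -/
theorem stmt0 :
    ∃ N : ℕ, ∀ n ≥ N, ∀ k q m : ℕ, 0 < k → 0 < q → 0 < m →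
      Real.sqrt n ≤ (k : ℝ) →
      (k : ℝ) = (q : ℝ) * (Real.logb 2 n) ^ 1000 →
      (m : ℝ) = (n : ℝ) ^ 2 / (4 * (n : ℝ) ^ 2 * Real.logb 2 n / (k : ℝ)) →
      ∀ block : Fin n × Fin n → Fin m,
        (∀ b : Fin m,
          ((Finset.univ.filter (fun p : Fin n × Fin n => block p = b)).card : ℝ)
            = (n : ℝ) ^ 2 / (m : ℝ)) →
        (((Finset.univ.filter (fun f : Fin k → Fin n × Fin n =>
            Real.sqrt ((k : ℝ) * q) ≤
              ((Finset.univ.filter (fun b : Fin m =>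
                ∀ i : Fin k, block (f i) ≠ b)).card : ℝ))).card : ℝ)
          / ((n : ℝ) ^ 2) ^ k)
          ≤ 2 ^ (-(q : ℝ) * (Real.logb 2 n) ^ 501) := by
  use 2
  intro n hn k q m hk hq hm hsqrt hkq hmval block hblock
  have hn2 : (2:ℝ) ≤ n := by exact_mod_cast hn
  have hn0 : (0:ℝ) < n := by linarith
  set L : ℝ := Real.logb 2 n with hLdef
  have hL1 : (1:ℝ) ≤ L := by
    rw [hLdef, show (1:ℝ) = Real.logb 2 2 from (Real.logb_self_eq_one one_lt_two).symm]
    exact Real.logb_le_logb_of_le one_lt_two two_pos hn2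
  have hL0 : (0:ℝ) < L := by linarith
  have hk0 : (0:ℝ) < k := by exact_mod_cast hk
  have hq0 : (0:ℝ) < q := by exact_mod_cast hq
  have hm0 : (0:ℝ) < m := by exact_mod_cast hm
  have hmk : (m:ℝ) = k / (4*L) := by
    rw [hmval]
    rw [div_div_eq_mul_div]
    field_simp
  have hkm : (k:ℝ)/(m:ℝ) = 4*L := by
    rw [hmk]; field_simp
  -- m ≤ n^2
  have hmn : (m:ℝ) ≤ (n:ℝ)^2 := by
    have h := hblock ⟨0, hm⟩
    have hpos : (0:ℝ) < (n:ℝ)^2/(m:ℝ) := by positivity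
    have hc0 : (0:ℝ) < ((Finset.univ.filter (fun p : Fin n × Fin n => block p = ⟨0, hm⟩)).card : ℝ) := by
      rw [h]; exact hpos
    have hc1 : 1 ≤ (Finset.univ.filter (fun p : Fin n × Fin n => block p = ⟨0, hm⟩)).card := by
      exact_mod_cast hc0
    have hc1' : (1:ℝ) ≤ ((Finset.univ.filter (fun p : Fin n × Fin n => block p = ⟨0, hm⟩)).card : ℝ) := by
      exact_mod_cast hc1
    rw [h, le_div_iff₀ hm0] at hc1'
    linarith
  set s : ℕ := ⌈Real.sqrt ((k:ℝ)*q)⌉₊ with hsdef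
  have hsqrt_val : Real.sqrt ((k:ℝ)*q) = (q:ℝ) * L^500 := by
    have h1 : (k:ℝ)*q = ((q:ℝ)*L^500)^2 := by rw [hkq]; ring
    rw [h1, Real.sqrt_sq (by positivity)]
  have hs_ge : (q:ℝ) * L^500 ≤ (s:ℝ) := hsqrt_val ▸ Nat.le_ceil _
  set E := (Finset.univ.filter (fun f : Fin k → Fin n × Fin n =>
            Real.sqrt ((k : ℝ) * q) ≤
              ((Finset.univ.filter (fun b : Fin m =>
                ∀ i : Fin k, block (f i) ≠ b)).card : ℝ))) with hEdef
  have hrhs0 : (0:ℝ) < (2:ℝ) ^ (-(q : ℝ) * L ^ 501) := Real.rpow_pos_of_pos two_pos _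
  by_cases hEempty : E = ∅
  · rw [hEempty]
    simp
    positivity
  -- E nonempty : get s ≤ m
  obtain ⟨f₀, hf₀⟩ := Finset.nonempty_iff_ne_empty.mpr hEempty
  have hsm : s ≤ m := by
    rw [hEdef, Finset.mem_filter] at hf₀
    have hcle : (Finset.univ.filter (fun b : Fin m => ∀ i : Fin k, block (f₀ i) ≠ b)).card ≤ m := by
      calc _ ≤ (Finset.univ : Finset (Fin m)).card := Finset.card_filter_le _ _
        _ = m := by simp
    have := Nat.ceil_le.mpr hf₀.2
    exact le_trans this hcle
  have hsm' : (s:ℝ) ≤ (m:ℝ) := by exact_mod_cast hsm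
  have h1sm : 0 ≤ 1 - (s:ℝ)/m := by
    rw [sub_nonneg, div_le_one hm0]; exact hsm'
  -- the union bound
  set T : Finset (Fin m) → Finset (Fin n × Fin n) :=
    fun S => Finset.univ.filter (fun p => block p ∉ S) with hTdef
  have hsubset : E ⊆ (Finset.powersetCard s (Finset.univ : Finset (Fin m))).biUnion
      (fun S => Fintype.piFinset (fun _ : Fin k => T S)) := by
    intro f hf
    rw [hEdef, Finset.mem_filter] at hf
    have hle : s ≤ (Finset.univ.filter (fun b : Fin m => ∀ i : Fin k, block (f i) ≠ b)).card :=
      Nat.ceil_le.mpr hf.2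
    obtain ⟨S, hS, hScard⟩ := Finset.exists_subset_card_eq hle
    rw [Finset.mem_biUnion]
    refine ⟨S, ?_, ?_⟩
    · rw [Finset.mem_powersetCard]
      exact ⟨Finset.subset_univ S, hScard⟩
    · rw [Fintype.mem_piFinset]
      intro i
      rw [hTdef]
      simp only [Finset.mem_filter, Finset.mem_univ, true_and]
      intro hmem
      have := hS hmem
      rw [Finset.mem_filter] at this
      exact this.2 i rfl
  have hcardbound : E.card ≤ ∑ S ∈ Finset.powersetCard s (Finset.univ : Finset (Fin m)),
      (T S).card ^ k := by
    calc E.card ≤ ((Finset.powersetCard s (Finset.univ : Finset (Fin m))).biUnion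
        (fun S => Fintype.piFinset (fun _ : Fin k => T S))).card := Finset.card_le_card hsubset
      _ ≤ ∑ S ∈ Finset.powersetCard s (Finset.univ : Finset (Fin m)),
          (Fintype.piFinset (fun _ : Fin k => T S)).card := Finset.card_biUnion_le
      _ = ∑ S ∈ Finset.powersetCard s (Finset.univ : Finset (Fin m)), (T S).card ^ k := by
          refine Finset.sum_congr rfl fun S _ => ?_
          rw [Fintype.card_piFinset]
          simp
  -- card of T S
  have hTcard : ∀ S ∈ Finset.powersetCard s (Finset.univ : Finset (Fin m)),
      ((T S).card : ℝ) = (n:ℝ)^2 * (1 - (s:ℝ)/m) := by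
    intro S hS
    rw [Finset.mem_powersetCard] at hS
    have hsplit : (Finset.univ.filter (fun p : Fin n × Fin n => block p ∈ S)).card
        + (T S).card = n^2 := by
      rw [hTdef]
      have := Finset.card_filter_add_card_filter_not
        (s := (Finset.univ : Finset (Fin n × Fin n))) (p := fun p => block p ∈ S)
      simpa [sq] using this
    have hin : ((Finset.univ.filter (fun p : Fin n × Fin n => block p ∈ S)).card : ℝ)
        = (s:ℝ) * ((n:ℝ)^2/m) := by
      have hunion : Finset.univ.filter (fun p : Fin n × Fin n => block p ∈ S)
          = S.biUnion (fun b => Finset.univ.filter (fun p => block p = b)) := by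
        ext p
        simp
      rw [hunion, Finset.card_biUnion]
      · push_cast
        rw [Finset.sum_congr rfl (fun b _ => hblock b), Finset.sum_const, hS.2]
        push_cast
        ring
      · intro b _ c _ hbc
        simp only [Finset.disjoint_left, Finset.mem_filter, Finset.mem_univ, true_and]
        intro p h1 h2
        exact hbc (h1.symm.trans h2)
    have hsplit' : ((Finset.univ.filter (fun p : Fin n × Fin n => block p ∈ S)).card : ℝ)
        + ((T S).card : ℝ) = (n:ℝ)^2 := by exact_mod_cast hsplit
    rw [hin] at hsplit'
    field_simp at hsplit' ⊢
    linarith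
  -- main card bound in ℝ
  have hEreal : (E.card : ℝ) ≤ (m.choose s : ℝ) * ((n:ℝ)^2 * (1 - (s:ℝ)/m))^k := by
    have h1 : (E.card : ℝ) ≤ ∑ S ∈ Finset.powersetCard s (Finset.univ : Finset (Fin m)),
        ((T S).card : ℝ)^k := by
      exact_mod_cast hcardbound
    calc (E.card : ℝ) ≤ _ := h1
      _ = ∑ S ∈ Finset.powersetCard s (Finset.univ : Finset (Fin m)),
          ((n:ℝ)^2 * (1 - (s:ℝ)/m))^k := by
          exact Finset.sum_congr rfl fun S hS => by rw [hTcard S hS]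
      _ = (m.choose s : ℝ) * ((n:ℝ)^2 * (1 - (s:ℝ)/m))^k := by
          rw [Finset.sum_const, Finset.card_powersetCard, Finset.card_univ, Fintype.card_fin]
          simp [nsmul_eq_mul]
  -- probability bound
  have hNpos : (0:ℝ) < ((n:ℝ)^2)^k := by positivity
  have hprob : (E.card : ℝ) / ((n:ℝ)^2)^k ≤ (m.choose s : ℝ) * (1 - (s:ℝ)/m)^k := by
    rw [div_le_iff₀ hNpos]
    calc (E.card : ℝ) ≤ (m.choose s : ℝ) * ((n:ℝ)^2 * (1 - (s:ℝ)/m))^k := hEreal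
      _ = (m.choose s : ℝ) * (1 - (s:ℝ)/m)^k * ((n:ℝ)^2)^k := by rw [mul_pow]; ring
  -- bound the choose term
  have hn_eq : (n:ℝ) = (2:ℝ) ^ L := (Real.rpow_logb two_pos (by norm_num) hn0).symm
  have hchoose : (m.choose s : ℝ) ≤ (2:ℝ) ^ (2*L*(s:ℝ)) := by
    calc (m.choose s : ℝ) ≤ ((m:ℝ))^s := by exact_mod_cast Nat.choose_le_pow m s
      _ ≤ ((n:ℝ)^2)^s := pow_le_pow_left₀ (le_of_lt hm0) hmn s
      _ = (2:ℝ) ^ (2*L*(s:ℝ)) := by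
          rw [hn_eq, ← Real.rpow_natCast ((2:ℝ)^L) 2, ← Real.rpow_mul (by norm_num),
            ← Real.rpow_natCast _ s, ← Real.rpow_mul (by norm_num)]
          norm_num
          ring_nf
  -- bound the power term
  have hpow : (1 - (s:ℝ)/m)^k ≤ (2:ℝ) ^ (-(4*L*(s:ℝ))) := by
    have hexp1 : 1 - (s:ℝ)/m ≤ Real.exp (-((s:ℝ)/m)) := by
      have := Real.add_one_le_exp (-((s:ℝ)/m))
      linarith
    have hexp2 : (1 - (s:ℝ)/m)^k ≤ Real.exp (-((s:ℝ)/m))^k :=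
      pow_le_pow_left₀ h1sm hexp1 k
    have hexp3 : Real.exp (-((s:ℝ)/m))^k = Real.exp (-(4*L*(s:ℝ))) := by
      rw [← Real.exp_nat_mul]
      congr 1
      have : (k:ℝ) * -((s:ℝ)/m) = -((s:ℝ) * ((k:ℝ)/m)) := by ring
      rw [this, hkm]
      ring
    have hexp4 : Real.exp (-(4*L*(s:ℝ))) ≤ (2:ℝ) ^ (-(4*L*(s:ℝ))) := by
      rw [Real.rpow_def_of_pos two_pos]
      apply Real.exp_le_exp.mpr
      have hlog2 : Real.log 2 < 1 := by
        have := Real.log_two_lt_d9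
        linarith
      have hlog2' : 0 < Real.log 2 := Real.log_pos (by norm_num)
      have hy : 0 ≤ 4*L*(s:ℝ) := by positivity
      nlinarith
    calc (1 - (s:ℝ)/m)^k ≤ Real.exp (-((s:ℝ)/m))^k := hexp2
      _ = Real.exp (-(4*L*(s:ℝ))) := hexp3
      _ ≤ (2:ℝ) ^ (-(4*L*(s:ℝ))) := hexp4
  -- combine
  have hcomb : (m.choose s : ℝ) * (1 - (s:ℝ)/m)^k ≤ (2:ℝ) ^ (-(2*L*(s:ℝ))) := by
    calc (m.choose s : ℝ) * (1 - (s:ℝ)/m)^k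
        ≤ (2:ℝ) ^ (2*L*(s:ℝ)) * (2:ℝ) ^ (-(4*L*(s:ℝ))) := by
          apply mul_le_mul hchoose hpow (pow_nonneg h1sm k) (Real.rpow_nonneg (by norm_num) _)
      _ = (2:ℝ) ^ (2*L*(s:ℝ) + -(4*L*(s:ℝ))) := (Real.rpow_add two_pos _ _).symm
      _ = (2:ℝ) ^ (-(2*L*(s:ℝ))) := by ring_nf
  have hfinal : (2:ℝ) ^ (-(2*L*(s:ℝ))) ≤ (2:ℝ) ^ (-(q : ℝ) * L ^ 501) := by
    apply (Real.rpow_le_rpow_left_iff one_lt_two).mpr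
    have h1 : (q:ℝ) * L^501 ≤ L * (s:ℝ) := by
      have := mul_le_mul_of_nonneg_left hs_ge (le_of_lt hL0)
      calc (q:ℝ) * L^501 = L * ((q:ℝ) * L^500) := by ring
        _ ≤ L * (s:ℝ) := this
    have h2 : (0:ℝ) ≤ (q:ℝ) * L^501 := by positivity
    linarith
  calc (E.card : ℝ) / ((n:ℝ)^2)^k ≤ (m.choose s : ℝ) * (1 - (s:ℝ)/m)^k := hprob
    _ ≤ (2:ℝ) ^ (-(2*L*(s:ℝ))) := hcomb
    _ ≤ (2:ℝ) ^ (-(q : ℝ) * L ^ 501) := hfinal
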